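/- For every continuous function ξ : [0,T] → ℝ one has ∫₀ᵀ ∫₀ᵀ φ(u−v) ξ(u) ξ(v) du dv ≥ 0; that is, the bilinear form ⟨ξ,η⟩_T = ∫₀ᵀ ∫₀ᵀ φ(u−v) ξ(u) η(v) du dv is positive semidefinite on continuous functions. -/

import Mathlib

open MeasureTheory intervalIntegral Set

open Real

lemma abs_rpow_intervalIntegrable {r : ℝ} (hr : -1 < r) (c A B : ℝ) :
    IntervalIntegrable (fun x => |x - c| ^ r) volume A B := by
  have base : ∀ b : ℝ, IntervalIntegrable (fun x => |x| ^ r) volume 0 b := by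
    have pos : ∀ b : ℝ, 0 ≤ b → IntervalIntegrable (fun x => |x| ^ r) volume 0 b := by
      intro b hb
      rw [intervalIntegrable_iff, uIoc_of_le hb]
      exact (intervalIntegrable_rpow' hr (a := 0) (b := b)).1.congr_fun
        (fun x hx => by rw [abs_of_nonneg hx.1.le]) measurableSet_Ioc
    intro b
    rcases le_total 0 b with hb | hb
    · exact pos b hb
    · rw [IntervalIntegrable.iff_comp_neg]
      simpa [abs_neg] using pos (-b) (by linarith)
  have all : ∀ A B : ℝ, IntervalIntegrable (fun x => |x| ^ r) volume A B := fun A B =>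
    (base A).symm.trans (base B)
  simpa using (all (A - c) (B - c)).comp_sub_right c

lemma abs_rpow_integrableOn_Icc {r : ℝ} (hr : -1 < r) (c A B : ℝ) :
    IntegrableOn (fun x => |x - c| ^ r) (Icc A B) := by
  rcases le_total A B with h | h
  · rw [integrableOn_Icc_iff_integrableOn_Ioc]
    have := abs_rpow_intervalIntegrable hr c A B
    rwa [intervalIntegrable_iff, uIoc_of_le h] at this
  · rcases lt_or_eq_of_le h with h' | h'
    · rw [Icc_eq_empty (by exact not_le.mpr h')]; exact integrableOn_empty
    · subst h'
      rw [Icc_self]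
      exact (integrableOn_singleton_iff).mpr (Or.inr (by simp))

lemma abs_rpow_integrableOn_Iio (p : ℝ) (hp : p < -1) :
    IntegrableOn (fun τ : ℝ => |τ| ^ p) (Iio (-1)) := by
  have h : IntegrableOn (fun τ : ℝ => |τ| ^ p) (Ioi (1:ℝ)) :=
    (integrableOn_Ioi_rpow_of_lt hp one_pos).congr_fun
      (fun x hx => by rw [abs_of_pos (lt_trans one_pos hx)]) measurableSet_Ioi
  rw [← integrable_indicator_iff measurableSet_Ioi] at h
  have h2 := h.comp_neg
  rw [← integrable_indicator_iff measurableSet_Iio]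
  refine h2.congr (Filter.Eventually.of_forall fun x => ?_)
  simp only [Set.indicator_apply, mem_Ioi, mem_Iio, abs_neg]
  by_cases hx : x < -1
  · rw [if_pos (by linarith), if_pos hx]
  · rw [if_neg (by intro h'; exact hx (by linarith)), if_neg hx]

lemma g_meas (a : ℝ) : Measurable (fun τ : ℝ => |τ| ^ a * |1 - τ| ^ a) := by fun_prop

lemma g_nonneg (a : ℝ) (τ : ℝ) : 0 ≤ |τ| ^ a * |1 - τ| ^ a :=
  mul_nonneg (rpow_nonneg (abs_nonneg _) _) (rpow_nonneg (abs_nonneg _) _)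

lemma int_g {a : ℝ} (ha1 : -1 < a) (ha2 : a < -1/2) :
    Integrable (fun τ : ℝ => |τ| ^ a * |1 - τ| ^ a) := by
  set g : ℝ → ℝ := fun τ => |τ| ^ a * |1 - τ| ^ a with hg
  have haa : a + a < -1 := by linarith
  have ha0 : a ≤ 0 := by linarith
  have hmeas := g_meas a
  -- piece 1 : Iio (-1)
  have p1 : IntegrableOn g (Iio (-1)) := by
    refine ((abs_rpow_integrableOn_Iio (a+a) haa)).mono' hmeas.aestronglyMeasurable.restrict ?_
    filter_upwards [ae_restrict_mem measurableSet_Iio] with τ hτ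
    have hτ' : τ < -1 := hτ
    have h1 : (0:ℝ) < |τ| := by rw [abs_of_neg (by linarith [hτ'] : τ < 0)]; linarith [hτ']
    have h2 : |τ| ≤ |1 - τ| := by
      rw [abs_of_neg (by linarith [hτ'] : τ < 0), abs_of_pos (by linarith [hτ'] : (0:ℝ) < 1 - τ)]; linarith [hτ']
    have : |1 - τ| ^ a ≤ |τ| ^ a := rpow_le_rpow_of_nonpos h1 h2 ha0
    calc ‖g τ‖ = |τ| ^ a * |1 - τ| ^ a := by
          rw [Real.norm_eq_abs, abs_of_nonneg (g_nonneg a τ)]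
      _ ≤ |τ| ^ a * |τ| ^ a := by
          exact mul_le_mul_of_nonneg_left this (rpow_nonneg (abs_nonneg _) _)
      _ = |τ| ^ (a + a) := (rpow_add h1 a a).symm
  -- piece 4 : Ioi 2
  have p4 : IntegrableOn g (Ioi 2) := by
    have dom : IntegrableOn (fun τ : ℝ => (2:ℝ) ^ (-a) * τ ^ (a+a)) (Ioi 2) :=
      ((integrableOn_Ioi_rpow_of_lt haa two_pos)).const_mul _
    refine dom.mono' hmeas.aestronglyMeasurable.restrict ?_
    filter_upwards [ae_restrict_mem measurableSet_Ioi] with τ hτ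
    have hτ2 : (2:ℝ) < τ := hτ
    have h0 : (0:ℝ) < τ := by linarith
    have h2 : |1 - τ| ^ a ≤ (τ/2) ^ a := by
      refine rpow_le_rpow_of_nonpos (by linarith) ?_ ha0
      rw [abs_of_neg (by linarith : 1 - τ < 0)]; linarith
    calc ‖g τ‖ = |τ| ^ a * |1 - τ| ^ a := by
          rw [Real.norm_eq_abs, abs_of_nonneg (g_nonneg a τ)]
      _ ≤ |τ| ^ a * (τ/2) ^ a := by
          exact mul_le_mul_of_nonneg_left h2 (rpow_nonneg (abs_nonneg _) _)
      _ = (2:ℝ) ^ (-a) * τ ^ (a+a) := by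
          rw [abs_of_pos h0, div_rpow h0.le (by norm_num), rpow_add h0, rpow_neg (by norm_num)]
          ring
  -- piece 2 : Icc (-1) (1/2)
  have p2 : IntegrableOn g (Icc (-1) (1/2)) := by
    have dom : IntegrableOn (fun τ : ℝ => (1/2:ℝ) ^ a * |τ - 0| ^ a) (Icc (-1) (1/2)) :=
      (abs_rpow_integrableOn_Icc ha1 0 (-1) (1/2)).const_mul _
    refine dom.mono' hmeas.aestronglyMeasurable.restrict ?_
    filter_upwards [ae_restrict_mem measurableSet_Icc] with τ hτ
    have h2 : |1 - τ| ^ a ≤ (1/2:ℝ) ^ a := by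
      refine rpow_le_rpow_of_nonpos (by norm_num) ?_ ha0
      rw [abs_of_nonneg (by linarith [hτ.2] : (0:ℝ) ≤ 1 - τ)]; linarith [hτ.2]
    calc ‖g τ‖ = |τ| ^ a * |1 - τ| ^ a := by
          rw [Real.norm_eq_abs, abs_of_nonneg (g_nonneg a τ)]
      _ ≤ |τ| ^ a * (1/2:ℝ) ^ a := by
          exact mul_le_mul_of_nonneg_left h2 (rpow_nonneg (abs_nonneg _) _)
      _ = (1/2:ℝ) ^ a * |τ - 0| ^ a := by rw [sub_zero]; ring
  -- piece 3 : Icc (1/2) 2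
  have p3 : IntegrableOn g (Icc (1/2) 2) := by
    have dom : IntegrableOn (fun τ : ℝ => (1/2:ℝ) ^ a * |τ - 1| ^ a) (Icc (1/2) 2) :=
      (abs_rpow_integrableOn_Icc ha1 1 (1/2) 2).const_mul _
    refine dom.mono' hmeas.aestronglyMeasurable.restrict ?_
    filter_upwards [ae_restrict_mem measurableSet_Icc] with τ hτ
    have h2 : |τ| ^ a ≤ (1/2:ℝ) ^ a := by
      refine rpow_le_rpow_of_nonpos (by norm_num) ?_ ha0
      rw [abs_of_nonneg (by linarith [hτ.1] : (0:ℝ) ≤ τ)]; linarith [hτ.1]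
    calc ‖g τ‖ = |τ| ^ a * |1 - τ| ^ a := by
          rw [Real.norm_eq_abs, abs_of_nonneg (g_nonneg a τ)]
      _ ≤ (1/2:ℝ) ^ a * |1 - τ| ^ a := by
          exact mul_le_mul_of_nonneg_right h2 (rpow_nonneg (abs_nonneg _) _)
      _ = (1/2:ℝ) ^ a * |τ - 1| ^ a := by rw [abs_sub_comm]
  -- combine
  have hcover : (Iio (-1) ∪ (Icc (-1) (1/2) ∪ (Icc (1/2) 2 ∪ Ioi 2))) = (univ : Set ℝ) := by
    ext x; simp only [mem_union, mem_Iio, mem_Icc, mem_Ioi, mem_univ, iff_true]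
    by_cases h1 : x < -1
    · exact Or.inl h1
    · by_cases h2 : x ≤ 1/2
      · exact Or.inr (Or.inl ⟨by linarith, h2⟩)
      · by_cases h3 : x ≤ 2
        · exact Or.inr (Or.inr (Or.inl ⟨by linarith, h3⟩))
        · exact Or.inr (Or.inr (Or.inr (by linarith)))
  have : IntegrableOn g (Iio (-1) ∪ (Icc (-1) (1/2) ∪ (Icc (1/2) 2 ∪ Ioi 2))) :=
    p1.union (p2.union (p3.union p4))
  rwa [hcover, integrableOn_univ] at this

lemma prod_eq (a : ℝ) (u v s : ℝ) (huv : u ≠ v) :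
    |u - s| ^ a * |v - s| ^ a
      = |v - u| ^ a * |v - u| ^ a *
        (|((v-u)⁻¹ * (s - u))| ^ a * |1 - (v-u)⁻¹ * (s - u)| ^ a) := by
  set d := v - u with hdd
  have hd : d ≠ 0 := sub_ne_zero.mpr (Ne.symm huv)
  have hda : (0:ℝ) < |d| := abs_pos.mpr hd
  have hdan : |d| ^ a ≠ 0 := (rpow_pos_of_pos hda a).ne'
  have e1 : |d⁻¹ * (s - u)| ^ a = (|d| ^ a)⁻¹ * |s - u| ^ a := by
    rw [abs_mul, abs_inv, mul_rpow (by positivity) (abs_nonneg _), inv_rpow (abs_nonneg _)]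
  have e2 : (1 - d⁻¹ * (s - u)) = d⁻¹ * (v - s) := by
    field_simp [hdd]
    rw [hdd]; ring
  have e3 : |1 - d⁻¹ * (s - u)| ^ a = (|d| ^ a)⁻¹ * |v - s| ^ a := by
    rw [e2, abs_mul, abs_inv, mul_rpow (by positivity) (abs_nonneg _), inv_rpow (abs_nonneg _)]
  rw [e1, e3, abs_sub_comm u s]
  field_simp

lemma f_int {a : ℝ} (ha1 : -1 < a) (ha2 : a < -1/2) (u v : ℝ) (huv : u ≠ v) :
    Integrable (fun s : ℝ => |u - s| ^ a * |v - s| ^ a) := by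
  set d := v - u with hdd
  have hd : d ≠ 0 := sub_ne_zero.mpr (Ne.symm huv)
  have h1 : Integrable (fun x : ℝ => |d⁻¹ * x| ^ a * |1 - d⁻¹ * x| ^ a) :=
    (int_g ha1 ha2).comp_mul_left' (inv_ne_zero hd)
  have h2 : Integrable (fun s : ℝ => |d⁻¹ * (s - u)| ^ a * |1 - d⁻¹ * (s - u)| ^ a) :=
    h1.comp_sub_right u
  exact (h2.const_mul (|d| ^ a * |d| ^ a)).congr
    (Filter.Eventually.of_forall fun s => (prod_eq a u v s huv).symm)

lemma kernel_repr {a : ℝ} (ha1 : -1 < a) (ha2 : a < -1/2) (u v : ℝ) (huv : u ≠ v) :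
    ∫ s : ℝ, |u - s| ^ a * |v - s| ^ a
      = (∫ τ : ℝ, |τ| ^ a * |1 - τ| ^ a) * |u - v| ^ (a + a + 1) := by
  set d := v - u with hdd
  have hd : d ≠ 0 := sub_ne_zero.mpr (Ne.symm huv)
  have hda : (0:ℝ) < |d| := abs_pos.mpr hd
  have step1 : ∫ s : ℝ, |u - s| ^ a * |v - s| ^ a
      = |d| ^ a * |d| ^ a *
        ∫ s : ℝ, |d⁻¹ * (s - u)| ^ a * |1 - d⁻¹ * (s - u)| ^ a := by
    rw [← MeasureTheory.integral_const_mul]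
    exact MeasureTheory.integral_congr_ae (Filter.Eventually.of_forall fun s =>
      prod_eq a u v s huv)
  have step2 : (∫ s : ℝ, |d⁻¹ * (s - u)| ^ a * |1 - d⁻¹ * (s - u)| ^ a)
      = ∫ x : ℝ, |d⁻¹ * x| ^ a * |1 - d⁻¹ * x| ^ a :=
    integral_sub_right_eq_self (fun x : ℝ => |d⁻¹ * x| ^ a * |1 - d⁻¹ * x| ^ a) u
  have step3 : (∫ x : ℝ, |d⁻¹ * x| ^ a * |1 - d⁻¹ * x| ^ a)
      = |d| • ∫ τ : ℝ, |τ| ^ a * |1 - τ| ^ a :=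
    MeasureTheory.Measure.integral_comp_inv_mul_left
      (fun τ : ℝ => |τ| ^ a * |1 - τ| ^ a) d
  rw [step1, step2, step3, smul_eq_mul]
  have : |u - v| = |d| := by rw [hdd, abs_sub_comm]
  rw [this, rpow_add hda, rpow_add hda, rpow_one]
  ring

lemma C_pos {a : ℝ} (ha1 : -1 < a) (ha2 : a < -1/2) :
    0 < ∫ τ : ℝ, |τ| ^ a * |1 - τ| ^ a := by
  have ha0 : a ≤ 0 := by linarith
  have hint := int_g ha1 ha2
  have step1 : ∫ τ in Icc (2:ℝ) 3, |τ| ^ a * |1 - τ| ^ a ≤ ∫ τ : ℝ, |τ| ^ a * |1 - τ| ^ a :=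
    setIntegral_le_integral hint (Filter.Eventually.of_forall fun τ => g_nonneg a τ)
  have step2 : (3:ℝ) ^ a * 2 ^ a ≤ ∫ τ in Icc (2:ℝ) 3, |τ| ^ a * |1 - τ| ^ a := by
    have hconst : ∫ τ in Icc (2:ℝ) 3, ((3:ℝ) ^ a * 2 ^ a) = (3:ℝ) ^ a * 2 ^ a := by
      simp [setIntegral_const, Real.volume_Icc]
      norm_num
    rw [← hconst]
    refine setIntegral_mono_on ((integrableOn_const_iff).mpr (Or.inr ?_)) hint.integrableOn
      measurableSet_Icc (fun τ hτ => ?_)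
    · rw [Real.volume_Icc]; exact ENNReal.ofReal_lt_top
    · have h1 : (3:ℝ) ^ a ≤ |τ| ^ a := by
        rw [abs_of_pos (by linarith [hτ.1] : (0:ℝ) < τ)]
        exact rpow_le_rpow_of_nonpos (by linarith [hτ.1]) hτ.2 ha0
      have h2 : (2:ℝ) ^ a ≤ |1 - τ| ^ a := by
        rw [abs_of_neg (by linarith [hτ.1] : 1 - τ < 0)]
        exact rpow_le_rpow_of_nonpos (by linarith [hτ.1]) (by linarith [hτ.2]) ha0
      exact mul_le_mul h1 h2 (rpow_nonneg (by norm_num) _) (rpow_nonneg (abs_nonneg _) _)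
  have hpos : (0:ℝ) < (3:ℝ) ^ a * 2 ^ a :=
    mul_pos (rpow_pos_of_pos (by norm_num) _) (rpow_pos_of_pos (by norm_num) _)
  linarith

lemma ker_slice {r : ℝ} (hr : -1 < r) (u : ℝ) (A B : ℝ) :
    IntegrableOn (fun v : ℝ => |u - v| ^ r) (Ioc A B) := by
  have h := abs_rpow_intervalIntegrable hr u A B
  rcases le_total A B with hAB | hAB
  · rw [intervalIntegrable_iff, uIoc_of_le hAB] at h
    exact h.congr_fun (fun v _ => by rw [abs_sub_comm]) measurableSet_Ioc
  · rw [Ioc_eq_empty (not_lt.mpr hAB)]; exact integrableOn_empty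

lemma ker_bound {r : ℝ} (hr : -1 < r) (T : ℝ) (hT : 0 < T) (u : ℝ) (hu : u ∈ Icc 0 T) :
    ∫ v in Ioc (0:ℝ) T, |u - v| ^ r ≤ ∫ w in (-T)..T, |w| ^ r := by
  have hsub : Ioc (0:ℝ) T ⊆ Icc (u - T) (u + T) := by
    intro v hv
    exact ⟨by linarith [hv.1, hu.2], by linarith [hv.2, hu.1]⟩
  have hIcc : IntegrableOn (fun v : ℝ => |u - v| ^ r) (Icc (u - T) (u + T)) :=
    (abs_rpow_integrableOn_Icc hr u (u-T) (u+T)).congr_fun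
      (fun v _ => by rw [abs_sub_comm]) measurableSet_Icc
  have step1 : ∫ v in Ioc (0:ℝ) T, |u - v| ^ r ≤ ∫ v in Icc (u - T) (u + T), |u - v| ^ r := by
    refine setIntegral_mono_set hIcc ?_ (HasSubset.Subset.eventuallyLE hsub)
    exact Filter.Eventually.of_forall fun v => rpow_nonneg (abs_nonneg _) _
  have step2 : ∫ v in Icc (u - T) (u + T), |u - v| ^ r = ∫ w in (-T)..T, |w| ^ r := by
    rw [integral_Icc_eq_integral_Ioc,
      ← intervalIntegral.integral_of_le (by linarith : u - T ≤ u + T)]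
    have : ∀ v : ℝ, |u - v| ^ r = (fun w : ℝ => |w| ^ r) (v - u) := fun v => by
      rw [abs_sub_comm]
    rw [intervalIntegral.integral_congr (fun v _ => this v),
      intervalIntegral.integral_comp_sub_right (fun w : ℝ => |w| ^ r) u]
    norm_num
  linarith

lemma ker_int {r : ℝ} (hr : -1 < r) (T : ℝ) (hT : 0 < T) :
    Integrable (fun p : ℝ × ℝ => |p.1 - p.2| ^ r)
      ((volume.restrict (Ioc (0:ℝ) T)).prod (volume.restrict (Ioc (0:ℝ) T))) := by
  set μ := volume.restrict (Ioc (0:ℝ) T) with hμ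
  have hmeas : AEStronglyMeasurable (fun p : ℝ × ℝ => |p.1 - p.2| ^ r) (μ.prod μ) := by
    have : Measurable (fun p : ℝ × ℝ => |p.1 - p.2| ^ r) := by fun_prop
    exact this.aestronglyMeasurable
  rw [integrable_prod_iff hmeas]
  constructor
  · exact Filter.Eventually.of_forall fun u => ker_slice hr u 0 T
  · have hB : ∀ᵐ u ∂μ, u ∈ Ioc (0:ℝ) T := ae_restrict_mem measurableSet_Ioc
    refine Integrable.mono' (g := fun _ => ∫ w in (-T)..T, |w| ^ r)
      ((integrableOn_const_iff).mpr (Or.inr (by rw [Real.volume_Ioc]; exact ENNReal.ofReal_lt_top)))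
      hmeas.norm.integral_prod_right' ?_
    filter_upwards [hB] with u hu
    have hnn : 0 ≤ ∫ v, ‖|u - v| ^ r‖ ∂μ :=
      integral_nonneg fun v => norm_nonneg _
    rw [Real.norm_eq_abs, abs_of_nonneg hnn]
    have : (∫ v, ‖|u - v| ^ r‖ ∂μ) = ∫ v in Ioc (0:ℝ) T, |u - v| ^ r := by
      refine MeasureTheory.integral_congr_ae (Filter.Eventually.of_forall fun v => ?_)
      simp only [Real.norm_eq_abs]
      exact abs_of_nonneg (rpow_nonneg (abs_nonneg _) _)
    rw [this]
    exact ker_bound hr T hT u ⟨hu.1.le, hu.2⟩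

lemma diag_null (T : ℝ) :
    ∀ᵐ p : ℝ × ℝ ∂((volume.restrict (Ioc (0:ℝ) T)).prod (volume.restrict (Ioc (0:ℝ) T))),
      p.1 ≠ p.2 := by
  set μ := volume.restrict (Ioc (0:ℝ) T) with hμ
  have hD : MeasurableSet {p : ℝ × ℝ | p.1 = p.2} :=
    measurableSet_eq_fun measurable_fst measurable_snd
  rw [ae_iff]
  have : {p : ℝ × ℝ | ¬ p.1 ≠ p.2} = {p : ℝ × ℝ | p.1 = p.2} := by
    ext p; simp
  rw [this, Measure.prod_apply hD]
  have : ∀ u : ℝ, μ (Prod.mk u ⁻¹' {p : ℝ × ℝ | p.1 = p.2}) = 0 := by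
    intro u
    have : Prod.mk u ⁻¹' {p : ℝ × ℝ | p.1 = p.2} = {u} := by
      ext v; simp [eq_comm]
    rw [this]
    exact le_antisymm (le_trans (Measure.restrict_le_self _)
      (le_of_eq Real.volume_singleton)) zero_le
  simp only [this, lintegral_zero]


/-- Positive semidefiniteness of the fractional Brownian motion scalar product
`⟨ξ,η⟩_T = ∫₀ᵀ ∫₀ᵀ φ(u−v) ξ(u) η(v) du dv` with kernel
`φ(x) = H(2H−1)|x|^{2H−2}`, for Hurst parameter `H ∈ (1/2,1)`:
for every continuous `ξ : [0,T] → ℝ`, `⟨ξ,ξ⟩_T ≥ 0`. -/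
theorem fbm_scalar_product_pos_semidef
    (H T : ℝ) (hH : H ∈ Set.Ioo (1/2 : ℝ) 1) (hT : 0 < T)
    (ξ : ℝ → ℝ) (hξ : ContinuousOn ξ (Set.Icc 0 T)) :
    0 ≤ ∫ u in (0:ℝ)..T, ∫ v in (0:ℝ)..T,
        (H * (2*H - 1) * |u - v| ^ (2*H - 2)) * ξ u * ξ v := by
  obtain ⟨hH1, hH2⟩ := hH
  have ha1 : -1 < H - 3/2 := by linarith
  have ha2 : H - 3/2 < -1/2 := by linarith
  set a : ℝ := H - 3/2 with ha
  have hr1 : -1 < 2*H - 2 := by linarith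
  have hra : 2*H - 2 = a + a + 1 := by rw [ha]; ring
  set C : ℝ := ∫ τ : ℝ, |τ| ^ a * |1 - τ| ^ a with hC
  have hCpos : 0 < C := C_pos ha1 ha2
  -- continuous global extension of ξ by clamping
  set ξ' : ℝ → ℝ := fun x => ξ (min (max x 0) T) with hξ'def
  have hclamp_mem : ∀ x : ℝ, min (max x 0) T ∈ Icc (0:ℝ) T := fun x =>
    ⟨le_min (le_max_right x 0) hT.le, min_le_right _ _⟩
  have hξ'c : Continuous ξ' :=
    hξ.comp_continuous ((continuous_id.max continuous_const).min continuous_const) hclamp_mem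
  have hξ'eq : ∀ x ∈ Icc (0:ℝ) T, ξ' x = ξ x := by
    intro x hx
    rw [hξ'def]
    simp only [max_eq_left hx.1, min_eq_left hx.2]
  obtain ⟨M, hM⟩ : ∃ M : ℝ, ∀ x : ℝ, |ξ' x| ≤ M := by
    obtain ⟨M, hM⟩ := (isCompact_Icc (a := (0:ℝ)) (b := T)).exists_bound_of_continuousOn hξ
    exact ⟨M, fun x => hM _ (hclamp_mem x)⟩
  -- replace ξ by ξ' and pull out the constant
  have goal_eq : (∫ u in (0:ℝ)..T, ∫ v in (0:ℝ)..T,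
        (H * (2*H - 1) * |u - v| ^ (2*H - 2)) * ξ u * ξ v)
      = H * (2*H - 1) * ∫ u in (0:ℝ)..T, ∫ v in (0:ℝ)..T,
          |u - v| ^ (2*H - 2) * ξ' u * ξ' v := by
    rw [← intervalIntegral.integral_const_mul]
    refine intervalIntegral.integral_congr fun u hu => ?_
    rw [← intervalIntegral.integral_const_mul]
    refine intervalIntegral.integral_congr fun v hv => ?_
    rw [uIcc_of_le hT.le] at hu hv
    rw [hξ'eq u hu, hξ'eq v hv]
    ring
  rw [goal_eq]
  have hc : 0 ≤ H * (2*H - 1) := by nlinarith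
  refine mul_nonneg hc ?_
  -- set-integral form
  set μ : Measure ℝ := volume.restrict (Ioc (0:ℝ) T) with hμ
  have hμfin : μ (Set.univ) < ⊤ := by
    rw [hμ, Measure.restrict_apply_univ, Real.volume_Ioc]
    exact ENNReal.ofReal_lt_top
  simp only [intervalIntegral.integral_of_le hT.le]
  -- kernel integrability on the square
  have hker : Integrable (fun p : ℝ × ℝ => |p.1 - p.2| ^ (2*H - 2)) (μ.prod μ) :=
    ker_int hr1 T hT
  have hK_meas : AEStronglyMeasurable
      (fun p : ℝ × ℝ => |p.1 - p.2| ^ (2*H - 2) * ξ' p.1 * ξ' p.2) (μ.prod μ) := by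
    have : Measurable (fun p : ℝ × ℝ => |p.1 - p.2| ^ (2*H - 2) * ξ' p.1 * ξ' p.2) := by
      have := hξ'c.measurable
      fun_prop
    exact this.aestronglyMeasurable
  have hM0 : 0 ≤ M := le_trans (abs_nonneg _) (hM 0)
  have hK_int : Integrable
      (fun p : ℝ × ℝ => |p.1 - p.2| ^ (2*H - 2) * ξ' p.1 * ξ' p.2) (μ.prod μ) := by
    refine Integrable.mono' ((hker.const_mul (M * M))) hK_meas ?_
    refine Filter.Eventually.of_forall fun p => ?_
    have h0 : (0:ℝ) ≤ |p.1 - p.2| ^ (2*H - 2) := rpow_nonneg (abs_nonneg _) _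
    calc ‖|p.1 - p.2| ^ (2*H - 2) * ξ' p.1 * ξ' p.2‖
        = |p.1 - p.2| ^ (2*H - 2) * (|ξ' p.1| * |ξ' p.2|) := by
          rw [Real.norm_eq_abs, abs_mul, abs_mul, abs_of_nonneg h0]; ring
      _ ≤ |p.1 - p.2| ^ (2*H - 2) * (M * M) := by
          refine mul_le_mul_of_nonneg_left ?_ h0
          exact mul_le_mul (hM _) (hM _) (abs_nonneg _) hM0
      _ = M * M * |p.1 - p.2| ^ (2*H - 2) := by ring
  have hdiag := diag_null T
  -- the factorized integrand
  set Ψ : (ℝ × ℝ) × ℝ → ℝ := fun q =>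
    (ξ' q.1.1 * |q.1.1 - q.2| ^ a) * (ξ' q.1.2 * |q.1.2 - q.2| ^ a) with hΨdef
  have hΨ_meas : AEStronglyMeasurable Ψ ((μ.prod μ).prod volume) := by
    have : Measurable Ψ := by
      have := hξ'c.measurable
      fun_prop
    exact this.aestronglyMeasurable
  have hΨ_int : Integrable Ψ ((μ.prod μ).prod volume) := by
    rw [integrable_prod_iff hΨ_meas]
    constructor
    · filter_upwards [hdiag] with p hp
      have h := (f_int ha1 ha2 p.1 p.2 hp).const_mul (ξ' p.1 * ξ' p.2)
      exact h.congr (Filter.Eventually.of_forall fun s => by simp only [hΨdef]; ring)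
    · refine Integrable.mono' ((hker.const_mul (M * M * C)))
        hΨ_meas.norm.integral_prod_right' ?_
      filter_upwards [hdiag] with p hp
      have hnn : 0 ≤ ∫ s, ‖Ψ (p, s)‖ := integral_nonneg fun s => norm_nonneg _
      rw [Real.norm_eq_abs, abs_of_nonneg hnn]
      have hrepr := kernel_repr ha1 ha2 p.1 p.2 hp
      have heq : (∫ s, ‖Ψ (p, s)‖)
          = (|ξ' p.1| * |ξ' p.2|) * ∫ s, |p.1 - s| ^ a * |p.2 - s| ^ a := by
        rw [← MeasureTheory.integral_const_mul]
        refine MeasureTheory.integral_congr_ae (Filter.Eventually.of_forall fun s => ?_)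
        simp only [hΨdef, Real.norm_eq_abs, abs_mul,
          abs_of_nonneg (rpow_nonneg (abs_nonneg (p.1 - s)) a),
          abs_of_nonneg (rpow_nonneg (abs_nonneg (p.2 - s)) a)]
        ring
      rw [heq, hrepr, ← hC]
      have h0 : (0:ℝ) ≤ |p.1 - p.2| ^ (a + a + 1) := rpow_nonneg (abs_nonneg _) _
      calc |ξ' p.1| * |ξ' p.2| * (C * |p.1 - p.2| ^ (a + a + 1))
          ≤ M * M * (C * |p.1 - p.2| ^ (a + a + 1)) := by
            refine mul_le_mul_of_nonneg_right ?_ (mul_nonneg hCpos.le h0)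
            exact mul_le_mul (hM _) (hM _) (abs_nonneg _) hM0
        _ = M * M * C * |p.1 - p.2| ^ (2*H - 2) := by rw [hra]; ring
  -- main computation
  have keycalc : (∫ u, ∫ v, |u - v| ^ (2*H - 2) * ξ' u * ξ' v ∂μ ∂μ)
      = C⁻¹ * ∫ s : ℝ, (∫ u, ξ' u * |u - s| ^ a ∂μ) ^ 2 := by
    have e1 : (∫ u, ∫ v, |u - v| ^ (2*H - 2) * ξ' u * ξ' v ∂μ ∂μ)
        = ∫ p : ℝ × ℝ, |p.1 - p.2| ^ (2*H - 2) * ξ' p.1 * ξ' p.2 ∂(μ.prod μ) :=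
      MeasureTheory.integral_integral hK_int
    have e2 : (∫ p : ℝ × ℝ, |p.1 - p.2| ^ (2*H - 2) * ξ' p.1 * ξ' p.2 ∂(μ.prod μ))
        = ∫ p : ℝ × ℝ, (C⁻¹ * ∫ s : ℝ, Ψ (p, s)) ∂(μ.prod μ) := by
      refine MeasureTheory.integral_congr_ae ?_
      filter_upwards [hdiag] with p hp
      have hrepr := kernel_repr ha1 ha2 p.1 p.2 hp
      have heq : (∫ s : ℝ, Ψ (p, s))
          = (ξ' p.1 * ξ' p.2) * ∫ s, |p.1 - s| ^ a * |p.2 - s| ^ a := by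
        rw [← MeasureTheory.integral_const_mul]
        refine MeasureTheory.integral_congr_ae (Filter.Eventually.of_forall fun s => ?_)
        simp only [hΨdef]; ring
      rw [heq, hrepr, ← hC, ← hra]
      field_simp
    have e3 : (∫ p : ℝ × ℝ, (C⁻¹ * ∫ s : ℝ, Ψ (p, s)) ∂(μ.prod μ))
        = C⁻¹ * ∫ p : ℝ × ℝ, (∫ s : ℝ, Ψ (p, s)) ∂(μ.prod μ) :=
      MeasureTheory.integral_const_mul _ _
    have e4 : (∫ p : ℝ × ℝ, (∫ s : ℝ, Ψ (p, s)) ∂(μ.prod μ))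
        = ∫ s : ℝ, ∫ p : ℝ × ℝ, Ψ (p, s) ∂(μ.prod μ) :=
      MeasureTheory.integral_integral_swap hΨ_int
    have e5 : ∀ s : ℝ, (∫ p : ℝ × ℝ, Ψ (p, s) ∂(μ.prod μ))
        = (∫ u, ξ' u * |u - s| ^ a ∂μ) ^ 2 := by
      intro s
      have := MeasureTheory.integral_prod_mul (μ := μ) (ν := μ)
        (f := fun u => ξ' u * |u - s| ^ a) (g := fun v => ξ' v * |v - s| ^ a)
      rw [sq]
      exact this
    rw [e1, e2, e3, e4]
    congr 1
    exact MeasureTheory.integral_congr_ae (Filter.Eventually.of_forall e5)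
  rw [keycalc]
  exact mul_nonneg (inv_nonneg.mpr hCpos.le)
    (integral_nonneg fun s => sq_nonneg _)
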